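/- arXiv:1108.0539 — 3 statements merged into one kernel-verified Lean document; each statement's English description precedes it below -/
import Mathlib

section
/- Let a_i > 0 for i = 1,...,m and let f_j, g_j : ℝ → ℝ be Lipschitz with constants L_j^f, L_j^g respectively. If a_i > L_i^f · Σ_{j=1}^m |b_{ji}| + L_i^g · Σ_{j=1}^m |c_{ji}| for every i, then there exists a unique vector x* ∈ ℝ^m satisfying 0 = -a_i x_i* + Σ_j b_{ij} f_j(x_j*) + Σ_j c_{ij} g_j(x_j*) + d_i for all i. -/
/-- existence and uniqueness of the equilibrium point (Lemma 2.1). -/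
theorem stmt0 (m : ℕ) (a d : Fin m → ℝ) (b c : Fin m → Fin m → ℝ)
    (f g : Fin m → ℝ → ℝ) (Lf Lg : Fin m → ℝ)
    (ha : ∀ i, 0 < a i)
    (hf : ∀ j, ∀ u v : ℝ, |f j u - f j v| ≤ Lf j * |u - v|)
    (hg : ∀ j, ∀ u v : ℝ, |g j u - g j v| ≤ Lg j * |u - v|)
    (hcond : ∀ i, Lf i * ∑ j, |b j i| + Lg i * ∑ j, |c j i| < a i) :
    ∃! x : Fin m → ℝ, ∀ i,
      0 = -a i * x i + (∑ j, b i j * f j (x j)) + (∑ j, c i j * g j (x j)) + d i := by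
  have hLf : ∀ j, 0 ≤ Lf j := fun j => by
    have h := hf j 1 0
    have h0 := abs_nonneg (f j 1 - f j 0)
    simp at h; linarith
  have hLg : ∀ j, 0 ≤ Lg j := fun j => by
    have h := hg j 1 0
    have h0 := abs_nonneg (g j 1 - g j 0)
    simp at h; linarith
  -- the contraction ratio per coordinate
  set k : Fin m → ℝ := fun j => (Lf j * ∑ i, |b i j| + Lg j * ∑ i, |c i j|) / a j with hk
  have hknn : ∀ j, 0 ≤ k j := fun j => by
    apply div_nonneg _ (ha j).le
    have h1 : (0:ℝ) ≤ Lf j * ∑ i, |b i j| :=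
      mul_nonneg (hLf j) (Finset.sum_nonneg fun i _ => abs_nonneg _)
    have h2 : (0:ℝ) ≤ Lg j * ∑ i, |c i j| :=
      mul_nonneg (hLg j) (Finset.sum_nonneg fun i _ => abs_nonneg _)
    linarith
  have hklt : ∀ j, k j < 1 := fun j => by
    rw [div_lt_one (ha j)]; exact hcond j
  set K : NNReal := Finset.univ.sup (fun j => Real.toNNReal (k j)) with hK
  have hKlt : K < 1 := by
    apply Finset.sup_lt_iff (by norm_num : (0:NNReal) < 1) |>.mpr
    intro j _
    rw [← Real.toNNReal_one]
    exact (Real.toNNReal_lt_toNNReal_iff one_pos).mpr (hklt j)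
  have hkK : ∀ j, k j ≤ (K : ℝ) := fun j => by
    have : Real.toNNReal (k j) ≤ K :=
      Finset.le_sup (f := fun j => Real.toNNReal (k j)) (Finset.mem_univ j)
    calc k j = (Real.toNNReal (k j) : ℝ) := (Real.coe_toNNReal _ (hknn j)).symm
      _ ≤ (K : ℝ) := by exact_mod_cast this
  -- the map S on PiLp 1
  set S : PiLp 1 (fun _ : Fin m => ℝ) → PiLp 1 (fun _ : Fin m => ℝ) :=
    fun y => WithLp.toLp 1 (fun i => (∑ j, b i j * f j (y j / a j)) + (∑ j, c i j * g j (y j / a j)) + d i) with hS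
  have hdist : ∀ x y : PiLp 1 (fun _ : Fin m => ℝ), dist x y = ∑ i, |x i - y i| := by
    intro x y
    rw [PiLp.dist_eq_sum (by norm_num)]
    simp [Real.dist_eq]
  have hcontr : ContractingWith K S := by
    constructor
    · exact hKlt
    · apply LipschitzWith.of_dist_le_mul
      intro y z
      rw [hdist, hdist]
      have step : ∀ i, |S y i - S z i| ≤
          ∑ j, (|b i j| * Lf j + |c i j| * Lg j) / a j * |y j - z j| := by
        intro i
        have e1 : S y i - S z i = (∑ j, b i j * (f j (y j / a j) - f j (z j / a j)))
            + ∑ j, c i j * (g j (y j / a j) - g j (z j / a j)) := by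
          simp only [hS, mul_sub, Finset.sum_sub_distrib]
          ring
        rw [e1]
        calc |_| ≤ (∑ j, |b i j * (f j (y j / a j) - f j (z j / a j))|)
              + ∑ j, |c i j * (g j (y j / a j) - g j (z j / a j))| := by
              exact (abs_add_le _ _).trans (add_le_add (Finset.abs_sum_le_sum_abs _ _)
                (Finset.abs_sum_le_sum_abs _ _))
          _ ≤ ∑ j, (|b i j| * Lf j + |c i j| * Lg j) / a j * |y j - z j| := by
              rw [← Finset.sum_add_distrib]
              apply Finset.sum_le_sum
              intro j _
              rw [abs_mul, abs_mul]
              have hy : |y j / a j - z j / a j| = |y j - z j| / a j := by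
                rw [div_sub_div_same, abs_div, abs_of_pos (ha j)]
              have h1 : |b i j| * |f j (y j / a j) - f j (z j / a j)| ≤
                  |b i j| * (Lf j * (|y j - z j| / a j)) := by
                apply mul_le_mul_of_nonneg_left _ (abs_nonneg _)
                calc _ ≤ Lf j * |y j / a j - z j / a j| := hf j _ _
                  _ = Lf j * (|y j - z j| / a j) := by rw [hy]
              have h2 : |c i j| * |g j (y j / a j) - g j (z j / a j)| ≤
                  |c i j| * (Lg j * (|y j - z j| / a j)) := by
                apply mul_le_mul_of_nonneg_left _ (abs_nonneg _)
                calc _ ≤ Lg j * |y j / a j - z j / a j| := hg j _ _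
                  _ = Lg j * (|y j - z j| / a j) := by rw [hy]
              calc _ ≤ |b i j| * (Lf j * (|y j - z j| / a j))
                    + |c i j| * (Lg j * (|y j - z j| / a j)) := add_le_add h1 h2
                _ = (|b i j| * Lf j + |c i j| * Lg j) / a j * |y j - z j| := by
                  field_simp
      calc ∑ i, |S y i - S z i|
          ≤ ∑ i, ∑ j, (|b i j| * Lf j + |c i j| * Lg j) / a j * |y j - z j| :=
            Finset.sum_le_sum fun i _ => step i
        _ = ∑ j, k j * |y j - z j| := by
            rw [Finset.sum_comm]
            apply Finset.sum_congr rfl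
            intro j _
            rw [← Finset.sum_mul]
            congr 1
            rw [← Finset.sum_div, Finset.sum_add_distrib, ← Finset.sum_mul, ← Finset.sum_mul]
            simp only [hk]
            ring
        _ ≤ ∑ j, (K : ℝ) * |y j - z j| :=
            Finset.sum_le_sum fun j _ =>
              mul_le_mul_of_nonneg_right (hkK j) (abs_nonneg _)
        _ = (K : ℝ) * ∑ j, |y j - z j| := by rw [Finset.mul_sum]
  -- correspondence between equilibria and fixed points
  have hequiv : ∀ x : Fin m → ℝ,
      (∀ i, 0 = -a i * x i + (∑ j, b i j * f j (x j)) + (∑ j, c i j * g j (x j)) + d i)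
      ↔ Function.IsFixedPt S (WithLp.toLp 1 (fun i => a i * x i)) := by
    intro x
    have harg : ∀ j, a j * x j / a j = x j := fun j =>
      mul_div_cancel_left₀ _ (ha j).ne'
    constructor
    · intro h
      ext i
      have := h i
      simp only [hS, PiLp.toLp_apply]
      simp only [harg]
      linarith
    · intro h i
      have := congrArg (fun v => v i) h
      simp only [hS, PiLp.toLp_apply, harg] at this
      linarith
  set y := ContractingWith.fixedPoint S hcontr with hydef
  have hy : Function.IsFixedPt S y := hcontr.fixedPoint_isFixedPt
  have hyu : ∀ z, Function.IsFixedPt S z → z = y := fun z hz =>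
    hcontr.fixedPoint_unique hz
  refine ⟨fun i => y i / a i, ?_, ?_⟩
  · apply (hequiv _).mpr
    have : WithLp.toLp 1 (fun i => a i * (y i / a i)) = y := by
      ext i; rw [PiLp.toLp_apply]; rw [mul_comm, div_mul_cancel₀ _ (ha i).ne']
    rw [this]; exact hy
  · intro z hz
    have := hyu _ ((hequiv z).mp hz)
    funext i
    have := congrArg (fun v => v i) this
    simp only [PiLp.toLp_apply] at this
    rw [← this]
    exact (mul_div_cancel_left₀ _ (ha i).ne').symm
end

section
/- Let k₁, k₂, ℓ, θ̄ be positive reals and p a positive integer such that k₂θ̄ + (k₁θ̄ + ℓp)(1 + k₂θ̄)(1 + ℓ)^p e^{k₁θ̄} < 1. Suppose a nonnegative function y : [θ_k, θ_{k+1}) → ℝ (with θ_{k+1} - θ_k ≤ θ̄) satisfies, for all t in this interval, both y(t) ≤ (1 + k₂θ̄)·y(θ_k) + k₁∫_{θ_k}^t y(s) ds + ℓ·Σ_{θ_k ≤ τ_j < t} y(τ_j⁻) and y(θ_k) ≤ y(t) + k₂θ̄·y(θ_k) + k₁∫_{θ_k}^t y(s) ds + ℓ·Σ_{θ_k ≤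 τ_j < t} y(τ_j⁻), where at most p points τ_j lie in (θ_k, θ_{k+1}). Then y(θ_k) ≤ λ·y(t) for all t ∈ [θ_k, θ_{k+1}), where λ = (1 - (k₂θ̄ + (k₁θ̄ + ℓp)(1 + k₂θ̄)(1 + ℓ)^p e^{k₁θ̄}))⁻¹. -/
open Topology Filter Set

open MeasureTheory

lemma segInt {θk θk1 : ℝ} {q : ℕ} {τ : Fin q → ℝ} {y : ℝ → ℝ} {yl : Fin q → ℝ}
    (hcont : ∀ t ∈ Set.Ico θk θk1, (∀ j, t ≠ τ j) → ContinuousWithinAt y (Set.Ico θk θk1) t)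
    (hll : ∀ j, Filter.Tendsto y (𝓝[<] τ j) (𝓝 (yl j)))
    {a b : ℝ} (ha : θk ≤ a) (hab : a ≤ b) (hb : b < θk1)
    (hca : ContinuousWithinAt y (Set.Icc a b) a)
    (hno : ∀ j, τ j ∉ Set.Ioo a b) :
    IntegrableOn y (Set.Icc a b) := by
  have hsub : Set.Icc a b ⊆ Set.Ico θk θk1 :=
    fun x hx => ⟨ha.trans hx.1, lt_of_le_of_lt hx.2 hb⟩
  have hint : ∀ x ∈ Set.Ioo a b, ContinuousWithinAt y (Set.Icc a b) x := by
    intro x hx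
    have hxne : ∀ j, x ≠ τ j := fun j hxe => hno j (hxe ▸ hx)
    exact (hcont x (hsub (Set.Ioo_subset_Icc_self hx)) hxne).mono hsub
  by_cases hbτ : ∃ j, b = τ j
  · obtain ⟨j₀, hj₀⟩ := hbτ
    set g := Function.update y b (yl j₀) with hgdef
    have hgy : ∀ x, x ≠ b → g x = y x := fun x hx => Function.update_of_ne hx _ _
    have hcg : ContinuousOn g (Set.Icc a b) := by
      intro x hx
      rcases eq_or_lt_of_le hx.2 with hxb | hxb
      · subst hxb
        rw [← continuousWithinAt_diff_self]
        have h1 : Filter.Tendsto y (𝓝[<] x) (𝓝 (yl j₀)) := hj₀ ▸ hll j₀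
        have h2 : Filter.Tendsto g (𝓝[<] x) (𝓝 (yl j₀)) := by
          refine h1.congr' ?_
          filter_upwards [self_mem_nhdsWithin] with z hz
          exact (hgy z (ne_of_lt hz)).symm
        have h3 : Filter.Tendsto g (𝓝[<] x) (𝓝 (g x)) := by
          rwa [hgdef, Function.update_self]
        exact h3.mono_left (nhdsWithin_mono _ (fun z hz => lt_of_le_of_ne hz.1.2 hz.2))
      · have hyx : ContinuousWithinAt y (Set.Icc a b) x := by
          rcases eq_or_lt_of_le hx.1 with hax | hax
          · exact hax ▸ hca
          · exact hint x ⟨hax, hxb⟩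
        refine hyx.congr_of_eventuallyEq ?_ (hgy x (ne_of_lt hxb))
        filter_upwards [mem_nhdsWithin_of_mem_nhds (Iio_mem_nhds hxb)] with z hz
        exact hgy z (ne_of_lt hz)
    have hgint : IntegrableOn g (Set.Icc a b) := hcg.integrableOn_Icc
    refine hgint.congr ?_
    have hnull : {x | g x ≠ y x} ⊆ {b} := by
      intro x hx
      by_contra h
      exact hx (hgy x h)
    have : ∀ᵐ x ∂(volume : Measure ℝ), g x = y x := by
      refine measure_mono_null hnull (measure_singleton b)
    exact MeasureTheory.ae_restrict_of_ae this
  · push_neg at hbτ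
    refine ContinuousOn.integrableOn_Icc ?_
    intro x hx
    rcases eq_or_lt_of_le hx.2 with hxb | hxb
    · subst hxb
      exact (hcont x (hsub hx) hbτ).mono hsub
    · rcases eq_or_lt_of_le hx.1 with hax | hax
      · exact hax ▸ hca
      · exact hint x ⟨hax, hxb⟩

lemma segGron {k₁ θk θk1 : ℝ} {q : ℕ} {τ : Fin q → ℝ} {y : ℝ → ℝ}
    (hk₁ : 0 < k₁)
    (hy0 : ∀ t ∈ Set.Ico θk θk1, 0 ≤ y t)
    (hcont : ∀ t ∈ Set.Ico θk θk1, (∀ j, t ≠ τ j) → ContinuousWithinAt y (Set.Ico θk θk1) t)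
    (hIcc : ∀ s ∈ Set.Ico θk θk1, IntegrableOn y (Set.Icc θk s))
    {a b C : ℝ} (ha : θk ≤ a) (hab : a ≤ b) (hb : b < θk1)
    (hcw : ContinuousWithinAt y (Set.Ici a) a)
    (hno : ∀ j, τ j ∉ Set.Ioo a b)
    (hyu : ∀ s ∈ Set.Icc a b, y s ≤ C + k₁ * ∫ x in θk..s, y x) :
    ∀ s ∈ Set.Icc a b, C + k₁ * (∫ x in θk..s, y x)
      ≤ (C + k₁ * ∫ x in θk..a, y x) * Real.exp (k₁ * (s - a)) := by
  have hbI : b ∈ Set.Ico θk θk1 := ⟨ha.trans hab, hb⟩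
  have hIb : IntegrableOn y (Set.Icc θk b) := hIcc b hbI
  have hii : ∀ c d : ℝ, θk ≤ c → c ≤ d → d ≤ b → IntervalIntegrable y volume c d := by
    intro c d hc hcd hdb
    rw [intervalIntegrable_iff_integrableOn_Ioc_of_le hcd]
    exact hIb.mono_set (fun x hx => ⟨hc.trans hx.1.le, hx.2.trans hdb⟩)
  set f : ℝ → ℝ := fun s => C + k₁ * ∫ x in θk..s, y x with hf
  -- nonnegativity of f on [a,b]
  have hf0 : ∀ s ∈ Set.Icc a b, 0 ≤ f s := fun s hs =>
    (hy0 s ⟨ha.trans hs.1, lt_of_le_of_lt hs.2 hb⟩).trans (hyu s hs)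
  -- continuity of f on [a, b]
  have hfc : ContinuousOn f (Set.Icc a b) := by
    have hIab : IntegrableOn y (Set.Icc a b) :=
      hIb.mono_set (fun x hx => ⟨ha.trans hx.1, hx.2⟩)
    have hprim : ContinuousOn (fun s => ∫ t in Set.Ioc a s, y t) (Set.Icc a b) :=
      intervalIntegral.continuousOn_primitive hIab
    have hcomp : ContinuousOn
        (fun s => C + k₁ * ((∫ x in θk..a, y x) + ∫ t in Set.Ioc a s, y t)) (Set.Icc a b) :=
      continuousOn_const.add (continuousOn_const.mul (continuousOn_const.add hprim))
    refine hcomp.congr ?_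
    intro s hs
    have h1 : (∫ x in θk..s, y x) = (∫ x in θk..a, y x) + ∫ x in a..s, y x :=
      (intervalIntegral.integral_add_adjacent_intervals (hii θk a le_rfl ha hab)
        (hii a s ha hs.1 hs.2)).symm
    have h2 : (∫ x in a..s, y x) = ∫ t in Set.Ioc a s, y t :=
      intervalIntegral.integral_of_le hs.1
    simp only [hf, h1, h2]
  -- derivative of f
  have hfd : ∀ x ∈ Set.Ico a b, HasDerivWithinAt f (k₁ * y x) (Set.Ici x) x := by
    intro x hx
    have hxI : x ∈ Set.Ico θk θk1 := ⟨ha.trans hx.1, lt_of_lt_of_le hx.2 hb.le⟩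
    have hmeas : StronglyMeasurableAtFilter y (𝓝[Set.Ioi x] x) volume := by
      refine ⟨Set.Ico x b, ?_, ?_⟩
      · have h' : Set.Ioi x ∩ Set.Iio b ∈ 𝓝[Set.Ioi x] x :=
          inter_mem self_mem_nhdsWithin (mem_nhdsWithin_of_mem_nhds (Iio_mem_nhds hx.2))
        exact Filter.mem_of_superset h' (fun z hz => ⟨hz.1.le, hz.2⟩)
      · exact (hIb.mono_set (fun z hz => ⟨ha.trans (hx.1.trans hz.1), hz.2.le⟩)).aestronglyMeasurable
    have hcx : ContinuousWithinAt y (Set.Ici x) x := by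
      rcases eq_or_lt_of_le hx.1 with hax | hax
      · exact hax ▸ hcw
      · have hxne : ∀ j, x ≠ τ j := fun j hxe => hno j (hxe ▸ ⟨hax, hx.2⟩)
        refine (hcont x hxI hxne).mono_of_mem_nhdsWithin ?_
        have : Set.Ici x ∩ Set.Iio θk1 ∈ 𝓝[Set.Ici x] x :=
          inter_mem self_mem_nhdsWithin (mem_nhdsWithin_of_mem_nhds (Iio_mem_nhds hxI.2))
        exact Filter.mem_of_superset this (fun z hz => ⟨hxI.1.trans hz.1, hz.2⟩)
    have hbase : HasDerivWithinAt (fun u => ∫ t in θk..u, y t) (y x) (Set.Ici x) x :=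
      intervalIntegral.integral_hasDerivWithinAt_right (hii θk x le_rfl hxI.1 hx.2.le)
        hmeas (hcx.mono Set.Ioi_subset_Ici_self)
    exact (hbase.const_mul k₁).const_add C
  -- Gronwall
  have key := norm_le_gronwallBound_of_norm_deriv_right_le (f := f)
    (f' := fun x => k₁ * y x) (δ := f a) (K := k₁) (ε := 0) (a := a) (b := b) hfc hfd
    (le_of_eq (Real.norm_of_nonneg (hf0 a ⟨le_rfl, hab⟩)))
    (by
      intro x hx
      have hxI : x ∈ Set.Ico θk θk1 := ⟨ha.trans hx.1, lt_of_lt_of_le hx.2 hb.le⟩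
      have hyx : 0 ≤ y x := hy0 x hxI
      have h1 : ‖k₁ * y x‖ = k₁ * y x := Real.norm_of_nonneg (mul_nonneg hk₁.le hyx)
      have h2 : ‖f x‖ = f x := Real.norm_of_nonneg (hf0 x ⟨hx.1, hx.2.le⟩)
      rw [h1, h2, add_zero]
      exact mul_le_mul_of_nonneg_left (hyu x ⟨hx.1, hx.2.le⟩) hk₁.le)
  intro s hs
  have := key s hs
  rw [gronwallBound_ε0] at this
  exact (le_abs_self _).trans this

-- STATEMENT 2: the key lemma bounding y(θ_k) by λ·y(t) on [θ_k, θ_{k+1}).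
open Classical in
theorem stmt2 (k₁ k₂ ℓ θb lam : ℝ) (p : ℕ) (θk θk1 : ℝ) (q : ℕ) (τ : Fin q → ℝ)
    (y : ℝ → ℝ) (yl : Fin q → ℝ)
    (hk₁ : 0 < k₁) (hk₂ : 0 < k₂) (hℓ : 0 < ℓ) (hθb : 0 < θb) (hp : 0 < p)
    (hθ : θk < θk1) (hgap : θk1 - θk ≤ θb) (hq : q ≤ p)
    (hτmono : StrictMono τ) (hτmem : ∀ j, τ j ∈ Set.Ioo θk θk1)
    (hy0 : ∀ t ∈ Set.Ico θk θk1, 0 ≤ y t)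
    (hcont : ∀ t ∈ Set.Ico θk θk1, (∀ j, t ≠ τ j) → ContinuousWithinAt y (Set.Ico θk θk1) t)
    (hrc : ∀ j, ContinuousWithinAt y (Set.Ici (τ j)) (τ j))
    (hll : ∀ j, Filter.Tendsto y (𝓝[<] τ j) (𝓝 (yl j)))
    (hH4 : k₂ * θb + (k₁ * θb + ℓ * p) * (1 + k₂ * θb) * (1 + ℓ) ^ p * Real.exp (k₁ * θb) < 1)
    (hlam : lam = (1 - (k₂ * θb + (k₁ * θb + ℓ * p) * (1 + k₂ * θb) * (1 + ℓ) ^ p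
        * Real.exp (k₁ * θb)))⁻¹)
    (hineq1 : ∀ t ∈ Set.Ico θk θk1,
      y t ≤ (1 + k₂ * θb) * y θk + k₁ * (∫ s in θk..t, y s)
        + ℓ * ∑ j ∈ Finset.univ.filter (fun j => τ j < t), yl j)
    (hineq2 : ∀ t ∈ Set.Ico θk θk1,
      y θk ≤ y t + k₂ * θb * y θk + k₁ * (∫ s in θk..t, y s)
        + ℓ * ∑ j ∈ Finset.univ.filter (fun j => τ j < t), yl j) :
    ∀ t ∈ Set.Ico θk θk1, y θk ≤ lam * y t := by
  have hτgt : ∀ j, θk < τ j := fun j => (hτmem j).1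
  have hτlt : ∀ j, τ j < θk1 := fun j => (hτmem j).2
  have hyθk0 : 0 ≤ y θk := hy0 θk ⟨le_rfl, hθ⟩
  have hyl0 : ∀ j, 0 ≤ yl j := by
    intro j
    refine ge_of_tendsto (hll j) ?_
    filter_upwards [Ioo_mem_nhdsLT_of_mem (⟨hτgt j, le_rfl⟩ : τ j ∈ Set.Ioc θk (τ j))] with s hs
    exact hy0 s ⟨hs.1.le, hs.2.trans (hτlt j)⟩
  have hcwθk : ContinuousWithinAt y (Set.Ici θk) θk := by
    have hne : ∀ j, θk ≠ τ j := fun j => (hτgt j).ne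
    refine (hcont θk ⟨le_rfl, hθ⟩ hne).mono_of_mem_nhdsWithin ?_
    have h' : Set.Ici θk ∩ Set.Iio θk1 ∈ 𝓝[Set.Ici θk] θk :=
      inter_mem self_mem_nhdsWithin (mem_nhdsWithin_of_mem_nhds (Iio_mem_nhds hθ))
    exact Filter.mem_of_superset h' (fun z hz => ⟨hz.1, hz.2⟩)
  -- integrability of y on initial closed segments
  have hIcc : ∀ s ∈ Set.Ico θk θk1, IntegrableOn y (Set.Icc θk s) := by
    have key : ∀ i : ℕ, ∀ s ∈ Set.Ico θk θk1,
        (Finset.univ.filter (fun j => τ j < s)).card ≤ i → IntegrableOn y (Set.Icc θk s) := by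
      intro i
      induction i with
      | zero =>
        intro s hs hcard
        have hF : Finset.univ.filter (fun j => τ j < s) = ∅ :=
          Finset.card_eq_zero.mp (Nat.le_zero.mp hcard)
        have hno : ∀ j, τ j ∉ Set.Ioo θk s := by
          intro j hj
          have hmem : j ∈ Finset.univ.filter (fun j => τ j < s) :=
            Finset.mem_filter.mpr ⟨Finset.mem_univ j, hj.2⟩
          simp [hF] at hmem
        exact segInt hcont hll le_rfl hs.1 hs.2 (hcwθk.mono (fun x hx => hx.1)) hno
      | succ i ih =>
        intro s hs hcard
        by_cases hle : (Finset.univ.filter (fun j => τ j < s)).card ≤ i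
        · exact ih s hs hle
        · have hne : (Finset.univ.filter (fun j => τ j < s)).Nonempty :=
            Finset.card_pos.mp (by omega)
          set jm := (Finset.univ.filter (fun j => τ j < s)).max' hne with hjm
          have hjs : τ jm < s := (Finset.mem_filter.mp (Finset.max'_mem _ hne)).2
          have hF2 : Finset.univ.filter (fun j => τ j < s) = Finset.Iic jm := by
            ext j
            simp only [Finset.mem_filter, Finset.mem_univ, true_and, Finset.mem_Iic]
            constructor
            · intro hj
              exact Finset.le_max' _ _ (Finset.mem_filter.mpr ⟨Finset.mem_univ j, hj⟩)
            · intro hj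
              exact lt_of_le_of_lt (hτmono.monotone hj) hjs
          have h1 : IntegrableOn y (Set.Icc θk (τ jm)) := by
            refine ih (τ jm) ⟨(hτgt jm).le, hτlt jm⟩ ?_
            have heq : Finset.univ.filter (fun j => τ j < τ jm) = Finset.Iio jm := by
              ext j; simp [hτmono.lt_iff_lt]
            rw [heq, Fin.card_Iio]
            rw [hF2, Fin.card_Iic] at hcard
            omega
          have h2 : IntegrableOn y (Set.Icc (τ jm) s) := by
            refine segInt hcont hll (hτgt jm).le hjs.le hs.2
              ((hrc jm).mono (fun x hx => hx.1)) ?_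
            intro j hj
            have hjmem : j ∈ Finset.univ.filter (fun j => τ j < s) :=
              Finset.mem_filter.mpr ⟨Finset.mem_univ j, hj.2⟩
            have hle' : j ≤ jm := Finset.le_max' _ _ hjmem
            exact absurd (hτmono.monotone hle') (not_le.mpr hj.1)
          have h3 := h1.union h2
          rwa [Set.Icc_union_Icc_eq_Icc (hτgt jm).le hjs.le] at h3
    exact fun s hs => key q s hs ((Finset.card_filter_le _ _).trans (by simp))
  set A := (1 + k₂ * θb) * y θk with hA
  have hA0 : 0 ≤ A := mul_nonneg (by positivity) hyθk0
  have hl1 : (0:ℝ) ≤ 1 + ℓ := by linarith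
  have hP : ∀ i : ℕ, ∀ s ∈ Set.Ico θk θk1,
      (Finset.univ.filter (fun j => τ j < s)).card ≤ i →
      A + k₁ * (∫ x in θk..s, y x) + ℓ * ∑ j ∈ Finset.univ.filter (fun j => τ j < s), yl j
        ≤ A * (1 + ℓ) ^ i * Real.exp (k₁ * (s - θk)) := by
    intro i
    induction i with
    | zero =>
      intro s hs hcard
      have hF : Finset.univ.filter (fun j => τ j < s) = ∅ :=
        Finset.card_eq_zero.mp (Nat.le_zero.mp hcard)
      have hno : ∀ j, τ j ∉ Set.Ioo θk s := by
        intro j hj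
        have hmem : j ∈ Finset.univ.filter (fun j => τ j < s) :=
          Finset.mem_filter.mpr ⟨Finset.mem_univ j, hj.2⟩
        simp [hF] at hmem
      have hyu : ∀ s' ∈ Set.Icc θk s, y s' ≤ A + k₁ * ∫ x in θk..s', y x := by
        intro s' hs'
        have hs'I : s' ∈ Set.Ico θk θk1 := ⟨hs'.1, lt_of_le_of_lt hs'.2 hs.2⟩
        have h1 := hineq1 s' hs'I
        have hFs' : Finset.univ.filter (fun j => τ j < s') = ∅ := by
          rw [Finset.filter_eq_empty_iff]
          intro j _ hj
          have hmem : j ∈ Finset.univ.filter (fun j => τ j < s) :=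
            Finset.mem_filter.mpr ⟨Finset.mem_univ j, lt_of_lt_of_le hj hs'.2⟩
          simp [hF] at hmem
        rw [hFs'] at h1
        simpa using h1
      have hsg := segGron hk₁ hy0 hcont hIcc le_rfl hs.1 hs.2 hcwθk hno hyu s ⟨hs.1, le_rfl⟩
      rw [intervalIntegral.integral_same] at hsg
      rw [hF]
      simpa using hsg
    | succ i ih =>
      intro s hs hcard
      by_cases hle : (Finset.univ.filter (fun j => τ j < s)).card ≤ i
      · refine (ih s hs hle).trans ?_
        have hpow : (1+ℓ)^i ≤ (1+ℓ)^(i+1) := pow_le_pow_right₀ (by linarith) (Nat.le_succ i)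
        exact mul_le_mul_of_nonneg_right (mul_le_mul_of_nonneg_left hpow hA0)
          (Real.exp_nonneg _)
      · have hne : (Finset.univ.filter (fun j => τ j < s)).Nonempty :=
          Finset.card_pos.mp (by omega)
        set jm := (Finset.univ.filter (fun j => τ j < s)).max' hne with hjm
        have hjs : τ jm < s := (Finset.mem_filter.mp (Finset.max'_mem _ hne)).2
        have haI : τ jm ∈ Set.Ico θk θk1 := ⟨(hτgt jm).le, hτlt jm⟩
        have hF2 : Finset.univ.filter (fun j => τ j < s) = Finset.Iic jm := by
          ext j
          simp only [Finset.mem_filter, Finset.mem_univ, true_and, Finset.mem_Iic]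
          constructor
          · intro hj
            exact Finset.le_max' _ _ (Finset.mem_filter.mpr ⟨Finset.mem_univ j, hj⟩)
          · intro hj
            exact lt_of_le_of_lt (hτmono.monotone hj) hjs
        have hFa : Finset.univ.filter (fun j => τ j < τ jm) = Finset.Iio jm := by
          ext j; simp [hτmono.lt_iff_lt]
        have iha := ih (τ jm) haI (by rw [hFa, Fin.card_Iio]
                                      rw [hF2, Fin.card_Iic] at hcard; omega)
        rw [hFa] at iha
        set Ua := A + k₁ * (∫ x in θk..τ jm, y x) + ℓ * ∑ j ∈ Finset.Iio jm, yl j with hUa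
        have hii : ∀ c d : ℝ, θk ≤ c → c ≤ d → d < θk1 → IntervalIntegrable y volume c d := by
          intro c d hc hcd hdb
          rw [intervalIntegrable_iff_integrableOn_Ioc_of_le hcd]
          exact (hIcc d ⟨hc.trans hcd, hdb⟩).mono_set (fun x hx => ⟨hc.trans hx.1.le, hx.2⟩)
        have hylm : yl jm ≤ Ua := by
          refine le_of_tendsto (hll jm) ?_
          filter_upwards [Ioo_mem_nhdsLT_of_mem
            (⟨hτgt jm, le_rfl⟩ : τ jm ∈ Set.Ioc θk (τ jm))] with s' hs'
          have hs'I : s' ∈ Set.Ico θk θk1 := ⟨hs'.1.le, hs'.2.trans (hτlt jm)⟩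
          have h1 := hineq1 s' hs'I
          have hInt : (∫ x in θk..s', y x) ≤ ∫ x in θk..τ jm, y x := by
            rw [← intervalIntegral.integral_add_adjacent_intervals
              (hii θk s' le_rfl hs'.1.le hs'I.2) (hii s' (τ jm) hs'.1.le hs'.2.le (hτlt jm))]
            have hnn : 0 ≤ ∫ x in s'..τ jm, y x :=
              intervalIntegral.integral_nonneg hs'.2.le
                (fun u hu => hy0 u ⟨hs'.1.le.trans hu.1, lt_of_le_of_lt hu.2 (hτlt jm)⟩)
            linarith
          have hSum : (∑ j ∈ Finset.univ.filter (fun j => τ j < s'), yl j)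
              ≤ ∑ j ∈ Finset.Iio jm, yl j := by
            refine Finset.sum_le_sum_of_subset_of_nonneg ?_ (fun j _ _ => hyl0 j)
            intro j hj
            have hlt : τ j < τ jm := lt_trans (Finset.mem_filter.mp hj).2 hs'.2
            simpa [Finset.mem_Iio] using (hτmono.lt_iff_lt.mp hlt)
          have hm1 := mul_le_mul_of_nonneg_left hInt hk₁.le
          have hm2 := mul_le_mul_of_nonneg_left hSum hℓ.le
          rw [hUa]; linarith
        set C := A + ℓ * ∑ j ∈ Finset.Iic jm, yl j with hC
        have hyu : ∀ s' ∈ Set.Icc (τ jm) s, y s' ≤ C + k₁ * ∫ x in θk..s', y x := by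
          intro s' hs'
          have hs'I : s' ∈ Set.Ico θk θk1 :=
            ⟨(hτgt jm).le.trans hs'.1, lt_of_le_of_lt hs'.2 hs.2⟩
          have h1 := hineq1 s' hs'I
          have hSum : (∑ j ∈ Finset.univ.filter (fun j => τ j < s'), yl j)
              ≤ ∑ j ∈ Finset.Iic jm, yl j := by
            refine Finset.sum_le_sum_of_subset_of_nonneg ?_ (fun j _ _ => hyl0 j)
            intro j hj
            have h2 : τ j < s := lt_of_lt_of_le (Finset.mem_filter.mp hj).2 hs'.2
            have hmem : j ∈ Finset.univ.filter (fun j => τ j < s) :=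
              Finset.mem_filter.mpr ⟨Finset.mem_univ j, h2⟩
            rw [hF2] at hmem
            exact hmem
          have hm2 := mul_le_mul_of_nonneg_left hSum hℓ.le
          rw [hC]; linarith
        have hno2 : ∀ j, τ j ∉ Set.Ioo (τ jm) s := by
          intro j hj
          have hjmem : j ∈ Finset.univ.filter (fun j => τ j < s) :=
            Finset.mem_filter.mpr ⟨Finset.mem_univ j, hj.2⟩
          have hle' : j ≤ jm := Finset.le_max' _ _ hjmem
          exact absurd (hτmono.monotone hle') (not_le.mpr hj.1)
        have hseg := segGron hk₁ hy0 hcont hIcc (hτgt jm).le hjs.le hs.2 (hrc jm)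
          hno2 hyu s ⟨hjs.le, le_rfl⟩
        have hsplit : (∑ j ∈ Finset.Iic jm, yl j) = yl jm + ∑ j ∈ Finset.Iio jm, yl j := by
          rw [← Finset.Iio_insert, Finset.sum_insert (by simp)]
        have hCeq : C + k₁ * (∫ x in θk..τ jm, y x) = Ua + ℓ * yl jm := by
          rw [hC, hUa, hsplit]; ring
        have hCa : C + k₁ * (∫ x in θk..τ jm, y x) ≤ (1 + ℓ) * Ua := by
          rw [hCeq]
          have hm := mul_le_mul_of_nonneg_left hylm hℓ.le
          linarith
        have hgoal_eq : A + k₁ * (∫ x in θk..s, y x)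
            + ℓ * ∑ j ∈ Finset.univ.filter (fun j => τ j < s), yl j
            = C + k₁ * (∫ x in θk..s, y x) := by
          rw [hF2, hC]; ring
        rw [hgoal_eq]
        calc C + k₁ * (∫ x in θk..s, y x)
            ≤ (C + k₁ * ∫ x in θk..τ jm, y x) * Real.exp (k₁ * (s - τ jm)) := hseg
          _ ≤ ((1 + ℓ) * Ua) * Real.exp (k₁ * (s - τ jm)) :=
              mul_le_mul_of_nonneg_right hCa (Real.exp_nonneg _)
          _ ≤ ((1 + ℓ) * (A * (1 + ℓ) ^ i * Real.exp (k₁ * (τ jm - θk))))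
              * Real.exp (k₁ * (s - τ jm)) :=
              mul_le_mul_of_nonneg_right (mul_le_mul_of_nonneg_left iha hl1)
                (Real.exp_nonneg _)
          _ = A * (1 + ℓ) ^ (i+1) * Real.exp (k₁ * (s - θk)) := by
              rw [show k₁ * (s - θk) = k₁ * (τ jm - θk) + k₁ * (s - τ jm) by ring,
                Real.exp_add, pow_succ]
              ring
  set B := A * (1 + ℓ) ^ p * Real.exp (k₁ * θb) with hB
  have hB0 : 0 ≤ B :=
    mul_nonneg (mul_nonneg hA0 (pow_nonneg hl1 p)) (Real.exp_nonneg _)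
  have hbound : ∀ s ∈ Set.Ico θk θk1, y s ≤ B := by
    intro s hs
    have h1 := hineq1 s hs
    have h2 := hP p s hs ((Finset.card_filter_le _ _).trans (by simpa using hq))
    have h3 : Real.exp (k₁ * (s - θk)) ≤ Real.exp (k₁ * θb) :=
      Real.exp_le_exp.mpr (mul_le_mul_of_nonneg_left (by linarith [hs.2]) hk₁.le)
    have h4 : A * (1 + ℓ) ^ p * Real.exp (k₁ * (s - θk)) ≤ B := by
      rw [hB]
      exact mul_le_mul_of_nonneg_left h3 (mul_nonneg hA0 (pow_nonneg hl1 p))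
    exact h1.trans (h2.trans h4)
  have hylB : ∀ j, yl j ≤ B := by
    intro j
    refine le_of_tendsto (hll j) ?_
    filter_upwards [Ioo_mem_nhdsLT_of_mem (⟨hτgt j, le_rfl⟩ : τ j ∈ Set.Ioc θk (τ j))] with s hs
    exact hbound s ⟨hs.1.le, hs.2.trans (hτlt j)⟩
  intro t ht
  have hiit : IntervalIntegrable y volume θk t := by
    rw [intervalIntegrable_iff_integrableOn_Ioc_of_le ht.1]
    exact (hIcc t ht).mono_set Set.Ioc_subset_Icc_self
  have hIt : (∫ x in θk..t, y x) ≤ θb * B := by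
    have h1 : (∫ x in θk..t, y x) ≤ ∫ x in θk..t, B :=
      intervalIntegral.integral_mono_on ht.1 hiit intervalIntegrable_const
        (fun x hx => hbound x ⟨hx.1, lt_of_le_of_lt hx.2 ht.2⟩)
    rw [intervalIntegral.integral_const, smul_eq_mul] at h1
    exact h1.trans (mul_le_mul_of_nonneg_right (by linarith [ht.2]) hB0)
  have hSt : (∑ j ∈ Finset.univ.filter (fun j => τ j < t), yl j) ≤ (p : ℝ) * B := by
    have h1 := Finset.sum_le_card_nsmul (Finset.univ.filter (fun j => τ j < t)) yl B
      (fun j _ => hylB j)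
    have h2 : (Finset.univ.filter (fun j => τ j < t)).card ≤ p :=
      (Finset.card_filter_le _ _).trans (by simpa using hq)
    rw [nsmul_eq_mul] at h1
    exact h1.trans (mul_le_mul_of_nonneg_right (by exact_mod_cast h2) hB0)
  have h2 := hineq2 t ht
  have hpos : 0 < 1 - (k₂ * θb + (k₁ * θb + ℓ * p) * (1 + k₂ * θb) * (1 + ℓ) ^ p
      * Real.exp (k₁ * θb)) := by linarith
  rw [hlam, le_inv_mul_iff₀ hpos]
  have e1 : k₁ * (θb * B) + ℓ * ((p:ℝ) * B)
      = (k₁ * θb + ℓ * p) * ((1 + k₂ * θb) * (1 + ℓ) ^ p * Real.exp (k₁ * θb)) * y θk := by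
    rw [hB, hA]; ring
  have hk1I := mul_le_mul_of_nonneg_left hIt hk₁.le
  have hlS := mul_le_mul_of_nonneg_left hSt hℓ.le
  linarith
end

section
/- Let a > 0, ω > 0, and h : [0, ω] → ℝ be continuous, and let impulse values I_1, ..., I_p ∈ ℝ be attached to points 0 < τ_1 < ... < τ_p < ω. Define x(t) = ∫_0^ω G(t,s) h(s) ds + Σ_{k=1}^p G(t, τ_k) I_k with G as the Green's function G(t,s) = (1 - e^{-aω})⁻¹ e^{-a(t-s)} if s ≤ t and (1 - e^{-aω})⁻¹ e^{-a(ω+t-s)} if t < s. Then x(0) = x(ω), and on each interval between consecutive points of {0, τ_1, ..., τ_p, ω}, x is differentiable with x'(t) = -a x(t) + h(t), while at each τ_k, x(τ_k) - x(τ_k⁻) = I_k. -/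
open Topology Filter Set

/-- The Green's function for the periodic problem x' = -a x + h. -/
noncomputable def G5 (a ω t s : ℝ) : ℝ :=
  if s ≤ t then (1 - Real.exp (-(a * ω)))⁻¹ * Real.exp (-(a * (t - s)))
  else (1 - Real.exp (-(a * ω)))⁻¹ * Real.exp (-(a * (ω + t - s)))


noncomputable def F5 (a : ℝ) (h : ℝ → ℝ) (t : ℝ) : ℝ := ∫ s in (0:ℝ)..t, Real.exp (a*s) * h s

lemma c5_pos {a ω : ℝ} (ha : 0 < a) (hω : 0 < ω) : 0 < 1 - Real.exp (-(a*ω)) := by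
  have : Real.exp (-(a*ω)) < 1 := Real.exp_lt_one_iff.mpr (by nlinarith)
  linarith

lemma G5_eq (a ω t s : ℝ) : G5 a ω t s = (1 - Real.exp (-(a*ω)))⁻¹ * Real.exp (-(a*t)) *
    (if s ≤ t then Real.exp (a*s) else Real.exp (a*s) * Real.exp (-(a*ω))) := by
  unfold G5
  split_ifs with hst
  · rw [show -(a*(t-s)) = -(a*t) + a*s by ring, Real.exp_add]; ring
  · rw [show -(a*(ω+t-s)) = -(a*t) + (a*s + -(a*ω)) by ring, Real.exp_add, Real.exp_add]; ring

lemma hcont5 {a ω : ℝ} {h : ℝ → ℝ} (hh : ContinuousOn h (Icc 0 ω)) :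
    ContinuousOn (fun s => Real.exp (a*s) * h s) (Icc 0 ω) :=
  ((Real.continuous_exp.comp (continuous_const.mul continuous_id)).continuousOn).mul hh

lemma rep5 (a ω : ℝ) (h : ℝ → ℝ) (ha : 0 < a) (hω : 0 < ω) (hh : ContinuousOn h (Icc 0 ω))
    (t : ℝ) (ht : t ∈ Icc 0 ω) :
    (∫ s in (0:ℝ)..ω, G5 a ω t s * h s)
      = Real.exp (-(a*t)) * (F5 a h t
        + (1 - Real.exp (-(a*ω)))⁻¹ * Real.exp (-(a*ω)) * F5 a h ω) := by
  have hc := c5_pos ha hω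
  set c := 1 - Real.exp (-(a*ω)) with hcdef
  have hcont := hcont5 (a := a) hh
  have h1 : EqOn (fun s => G5 a ω t s * h s)
      (fun s => (c⁻¹ * Real.exp (-(a*t))) * (Real.exp (a*s) * h s)) (uIcc 0 t) := by
    intro s hs
    rw [uIcc_of_le ht.1] at hs
    simp only [G5_eq, if_pos hs.2]
    ring
  have h2 : ∀ s ∈ Ioc t ω, G5 a ω t s * h s
      = (c⁻¹ * Real.exp (-(a*t)) * Real.exp (-(a*ω))) * (Real.exp (a*s) * h s) := by
    intro s hs
    simp only [G5_eq, if_neg (not_le.mpr hs.1)]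
    ring
  have hsub1 : uIcc 0 t ⊆ Icc 0 ω := by
    rw [uIcc_of_le ht.1]; exact Icc_subset_Icc le_rfl ht.2
  have hsub2 : uIcc t ω ⊆ Icc 0 ω := by
    rw [uIcc_of_le ht.2]; exact Icc_subset_Icc ht.1 le_rfl
  have hint0 : IntervalIntegrable (fun s => Real.exp (a*s) * h s) MeasureTheory.volume 0 t :=
    (hcont.mono hsub1).intervalIntegrable
  have hint0' : IntervalIntegrable (fun s => Real.exp (a*s) * h s) MeasureTheory.volume t ω :=
    (hcont.mono hsub2).intervalIntegrable
  have hi1 : IntervalIntegrable (fun s => G5 a ω t s * h s) MeasureTheory.volume 0 t := by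
    refine (hint0.const_mul (c⁻¹ * Real.exp (-(a*t)))).congr ?_
    intro s hs
    exact (h1 (uIoc_subset_uIcc hs)).symm
  have hi2 : IntervalIntegrable (fun s => G5 a ω t s * h s) MeasureTheory.volume t ω := by
    refine (hint0'.const_mul (c⁻¹ * Real.exp (-(a*t)) * Real.exp (-(a*ω)))).congr ?_
    intro s hs
    rw [uIoc_of_le ht.2] at hs
    exact (h2 s hs).symm
  rw [← intervalIntegral.integral_add_adjacent_intervals hi1 hi2]
  have e1 : ∫ s in (0:ℝ)..t, G5 a ω t s * h s = (c⁻¹ * Real.exp (-(a*t))) * F5 a h t := by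
    rw [intervalIntegral.integral_congr h1, intervalIntegral.integral_const_mul]
    rfl
  have e2 : ∫ s in t..ω, G5 a ω t s * h s
      = (c⁻¹ * Real.exp (-(a*t)) * Real.exp (-(a*ω))) * (F5 a h ω - F5 a h t) := by
    rw [intervalIntegral.integral_of_le ht.2,
      MeasureTheory.setIntegral_congr_fun measurableSet_Ioc h2,
      ← intervalIntegral.integral_of_le ht.2, intervalIntegral.integral_const_mul]
    have hadd : (∫ s in (0:ℝ)..t, Real.exp (a*s) * h s) + ∫ s in t..ω, Real.exp (a*s) * h s
        = ∫ s in (0:ℝ)..ω, Real.exp (a*s) * h s :=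
      intervalIntegral.integral_add_adjacent_intervals hint0 hint0'
    congr 1
    simp only [F5]
    linarith
  rw [e1, e2]
  have hinv : c⁻¹ * (1 - Real.exp (-(a*ω))) = 1 := by
    rw [← hcdef]; exact inv_mul_cancel₀ hc.ne'
  linear_combination (Real.exp (-(a*t)) * F5 a h t) * hinv

lemma F5_hasDeriv {a ω : ℝ} {h : ℝ → ℝ} (hh : ContinuousOn h (Icc 0 ω))
    {t₀ : ℝ} (ht₀ : t₀ ∈ Ioo 0 ω) :
    HasDerivAt (F5 a h) (Real.exp (a*t₀) * h t₀) t₀ := by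
  have hcont := hcont5 (a := a) hh
  refine intervalIntegral.integral_hasDerivAt_right ((hcont.mono ?_).intervalIntegrable) ?_ ?_
  · rw [uIcc_of_le ht₀.1.le]; exact Icc_subset_Icc le_rfl ht₀.2.le
  · exact (hcont.mono Ioo_subset_Icc_self).stronglyMeasurableAtFilter isOpen_Ioo _ ht₀
  · exact hcont.continuousAt (Icc_mem_nhds ht₀.1 ht₀.2)

lemma xrep5 (a ω : ℝ) (p : ℕ) (h : ℝ → ℝ) (I : Fin p → ℝ) (τ : Fin p → ℝ)
    (x : ℝ → ℝ)
    (ha : 0 < a) (hω : 0 < ω) (hh : ContinuousOn h (Set.Icc 0 ω))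
    (hx : ∀ t, x t = (∫ s in (0 : ℝ)..ω, G5 a ω t s * h s) + ∑ k, G5 a ω t (τ k) * I k)
    (t : ℝ) (ht : t ∈ Icc 0 ω) :
    x t = Real.exp (-(a*t)) * (F5 a h t
      + (1 - Real.exp (-(a*ω)))⁻¹ * Real.exp (-(a*ω)) * F5 a h ω
      + ∑ k, (1 - Real.exp (-(a*ω)))⁻¹ *
          (if τ k ≤ t then Real.exp (a*τ k) else Real.exp (a*τ k) * Real.exp (-(a*ω))) * I k) := by
  rw [hx t, rep5 a ω h ha hω hh t ht]
  conv_rhs => rw [mul_add]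
  congr 1
  rw [Finset.mul_sum]
  refine Finset.sum_congr rfl fun k _ => ?_
  rw [G5_eq]
  ring

-- STATEMENT 5: the Green's function formula yields the ω-periodic solution of the
-- linear impulsive equation x' = -a x + h(t), Δx|_{τ_k} = I_k.
theorem stmt5 (a ω : ℝ) (p : ℕ) (h : ℝ → ℝ) (I : Fin p → ℝ) (τ : Fin p → ℝ)
    (x : ℝ → ℝ)
    (ha : 0 < a) (hω : 0 < ω) (hh : ContinuousOn h (Set.Icc 0 ω))
    (hτ : StrictMono τ) (hτmem : ∀ k, τ k ∈ Set.Ioo 0 ω)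
    (hx : ∀ t, x t = (∫ s in (0 : ℝ)..ω, G5 a ω t s * h s) + ∑ k, G5 a ω t (τ k) * I k) :
    x 0 = x ω
    ∧ (∀ t ∈ Set.Ioo (0 : ℝ) ω, (∀ k, t ≠ τ k) → HasDerivAt x (-a * x t + h t) t)
    ∧ (∀ k, Filter.Tendsto x (𝓝[<] τ k) (𝓝 (x (τ k) - I k))) := by
  have hc := c5_pos ha hω
  have hinv : (1 - Real.exp (-(a*ω)))⁻¹ * (1 - Real.exp (-(a*ω))) = 1 := inv_mul_cancel₀ hc.ne'
  have xr := xrep5 a ω p h I τ x ha hω hh hx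
  refine ⟨?_, ?_, ?_⟩
  · -- periodicity
    rw [xr 0 ⟨le_rfl, hω.le⟩, xr ω ⟨hω.le, le_rfl⟩]
    have hF0 : F5 a h 0 = 0 := intervalIntegral.integral_same
    have hs0 : ∑ k, (1 - Real.exp (-(a*ω)))⁻¹ *
        (if τ k ≤ (0:ℝ) then Real.exp (a*τ k) else Real.exp (a*τ k) * Real.exp (-(a*ω))) * I k
        = Real.exp (-(a*ω)) * ∑ k, (1 - Real.exp (-(a*ω)))⁻¹ * Real.exp (a*τ k) * I k := by
      rw [Finset.mul_sum]
      refine Finset.sum_congr rfl fun k _ => ?_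
      rw [if_neg (not_le.mpr (hτmem k).1)]
      ring
    have hsω : ∑ k, (1 - Real.exp (-(a*ω)))⁻¹ *
        (if τ k ≤ ω then Real.exp (a*τ k) else Real.exp (a*τ k) * Real.exp (-(a*ω))) * I k
        = ∑ k, (1 - Real.exp (-(a*ω)))⁻¹ * Real.exp (a*τ k) * I k := by
      refine Finset.sum_congr rfl fun k _ => ?_
      rw [if_pos (hτmem k).2.le]
    rw [hF0, hs0, hsω, mul_zero, neg_zero, Real.exp_zero]
    linear_combination (Real.exp (-(a*ω)) * F5 a h ω) * hinv
  · -- differential equation away from impulse points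
    rintro t₀ ht₀ hne
    set K := (1 - Real.exp (-(a*ω)))⁻¹ * Real.exp (-(a*ω)) * F5 a h ω
      + ∑ k, (1 - Real.exp (-(a*ω)))⁻¹ *
          (if τ k ≤ t₀ then Real.exp (a*τ k) else Real.exp (a*τ k) * Real.exp (-(a*ω))) * I k
      with hK
    have hev : ∀ᶠ t in 𝓝 t₀, t ∈ Ioo 0 ω ∧ ∀ k, (τ k ≤ t ↔ τ k ≤ t₀) := by
      refine (isOpen_Ioo.eventually_mem ht₀).and ?_
      rw [eventually_all]
      intro k
      rcases lt_or_gt_of_ne (hne k) with hlt | hgt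
      · filter_upwards [gt_mem_nhds hlt] with t ht
        exact iff_of_false (not_le.mpr ht) (not_le.mpr hlt)
      · filter_upwards [lt_mem_nhds hgt] with t ht
        exact iff_of_true ht.le hgt.le
    have hxy : x =ᶠ[𝓝 t₀] fun t => Real.exp (-(a*t)) * (F5 a h t + K) := by
      filter_upwards [hev] with t ht
      obtain ⟨htI, htk⟩ := ht
      rw [xr t (Ioo_subset_Icc_self htI), hK]
      have hSS : (∑ k, (1 - Real.exp (-(a*ω)))⁻¹ *
          (if τ k ≤ t then Real.exp (a*τ k) else Real.exp (a*τ k) * Real.exp (-(a*ω))) * I k)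
          = ∑ k, (1 - Real.exp (-(a*ω)))⁻¹ *
          (if τ k ≤ t₀ then Real.exp (a*τ k) else Real.exp (a*τ k) * Real.exp (-(a*ω))) * I k :=
        Finset.sum_congr rfl fun k _ => by simp only [htk k]
      rw [hSS]
      ring
    have hF := F5_hasDeriv (a := a) hh ht₀
    have h1 : HasDerivAt (fun t : ℝ => -(a*t)) (-a) t₀ := by
      have h := ((hasDerivAt_id t₀).const_mul a).neg; rw [mul_one] at h; exact h
    have hE : HasDerivAt (fun t : ℝ => Real.exp (-(a*t))) (Real.exp (-(a*t₀)) * (-a)) t₀ := h1.exp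
    have hy : HasDerivAt (fun t => Real.exp (-(a*t)) * (F5 a h t + K))
        (Real.exp (-(a*t₀)) * (-a) * (F5 a h t₀ + K)
          + Real.exp (-(a*t₀)) * (Real.exp (a*t₀) * h t₀)) t₀ := hE.mul (hF.add_const K)
    have hxy0 : x t₀ = Real.exp (-(a*t₀)) * (F5 a h t₀ + K) := hxy.eq_of_nhds
    have hval : -a * x t₀ + h t₀
        = Real.exp (-(a*t₀)) * (-a) * (F5 a h t₀ + K)
          + Real.exp (-(a*t₀)) * (Real.exp (a*t₀) * h t₀) := by
      rw [hxy0, show Real.exp (-(a*t₀)) * (Real.exp (a*t₀) * h t₀) = h t₀ from by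
        rw [← mul_assoc, ← Real.exp_add]; simp]
      ring
    rw [hval]
    exact hy.congr_of_eventuallyEq hxy
  · -- impulse condition
    intro k
    have hτk := hτmem k
    set K := (1 - Real.exp (-(a*ω)))⁻¹ * Real.exp (-(a*ω)) * F5 a h ω
      + ∑ j, (1 - Real.exp (-(a*ω)))⁻¹ *
          (if τ j ≤ τ k then Real.exp (a*τ j) else Real.exp (a*τ j) * Real.exp (-(a*ω))) * I j
      with hK
    have hx0 : x (τ k) = Real.exp (-(a*(τ k))) * (F5 a h (τ k) + K) := by
      rw [xr (τ k) (Ioo_subset_Icc_self hτk), hK]; ring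
    have h1 : ∀ᶠ t in 𝓝[<] (τ k), t ∈ Ioo 0 ω ∧ ∀ j, j ≠ k → (τ j ≤ t ↔ τ j ≤ τ k) := by
      refine Filter.Eventually.filter_mono nhdsWithin_le_nhds ?_
      refine (isOpen_Ioo.eventually_mem hτk).and ?_
      rw [eventually_all]
      intro j
      rcases eq_or_ne j k with rfl | hjk
      · filter_upwards with t hjj; exact absurd rfl hjj
      · rcases (hτ.injective.ne hjk).lt_or_gt with hlt | hgt
        · filter_upwards [lt_mem_nhds hlt] with t ht _
          exact iff_of_true ht.le hlt.le
        · filter_upwards [gt_mem_nhds hgt] with t ht _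
          exact iff_of_false (not_le.mpr ht) (not_le.mpr hgt)
    have hev : x =ᶠ[𝓝[<] (τ k)] fun t => Real.exp (-(a*t)) * (F5 a h t + K)
        - Real.exp (-(a*t)) * (Real.exp (a*τ k) * I k) := by
      filter_upwards [h1, self_mem_nhdsWithin] with t ht htlt
      obtain ⟨htI, htj⟩ := ht
      rw [xr t (Ioo_subset_Icc_self htI), hK]
      have hSS : (∑ j, (1 - Real.exp (-(a*ω)))⁻¹ *
          (if τ j ≤ t then Real.exp (a*τ j) else Real.exp (a*τ j) * Real.exp (-(a*ω))) * I j)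
          = (∑ j, (1 - Real.exp (-(a*ω)))⁻¹ *
          (if τ j ≤ τ k then Real.exp (a*τ j) else Real.exp (a*τ j) * Real.exp (-(a*ω))) * I j)
          - (1 - Real.exp (-(a*ω)))⁻¹ * Real.exp (a*τ k) * I k
          + (1 - Real.exp (-(a*ω)))⁻¹ * (Real.exp (a*τ k) * Real.exp (-(a*ω))) * I k := by
        rw [← Finset.sum_erase_add _ _ (Finset.mem_univ k),
          ← Finset.sum_erase_add _ _ (Finset.mem_univ k)]
        have hsame : (∑ j ∈ Finset.univ.erase k, (1 - Real.exp (-(a*ω)))⁻¹ *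
            (if τ j ≤ t then Real.exp (a*τ j) else Real.exp (a*τ j) * Real.exp (-(a*ω))) * I j)
            = ∑ j ∈ Finset.univ.erase k, (1 - Real.exp (-(a*ω)))⁻¹ *
            (if τ j ≤ τ k then Real.exp (a*τ j) else Real.exp (a*τ j) * Real.exp (-(a*ω))) * I j :=
          Finset.sum_congr rfl fun j hj => by
            simp only [htj j (Finset.ne_of_mem_erase hj)]
        rw [hsame, if_neg (not_le.mpr htlt), if_pos le_rfl]
        ring
      rw [hSS]
      have hmem : t ∈ Set.Iio (τ k) := htlt
      linear_combination (-(Real.exp (-(a*t)) * Real.exp (a*τ k) * I k)) * hinv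
    have hFc : ContinuousAt (F5 a h) (τ k) := (F5_hasDeriv (a := a) hh hτk).continuousAt
    have hEc : ContinuousAt (fun t : ℝ => Real.exp (-(a*t))) (τ k) :=
      (Real.continuous_exp.comp (continuous_const.mul continuous_id).neg).continuousAt
    have hgc : ContinuousAt (fun t => Real.exp (-(a*t)) * (F5 a h t + K)
        - Real.exp (-(a*t)) * (Real.exp (a*τ k) * I k)) (τ k) :=
      (hEc.mul (hFc.add continuousAt_const)).sub (hEc.mul continuousAt_const)
    have hgv : Real.exp (-(a*(τ k))) * (F5 a h (τ k) + K)
        - Real.exp (-(a*(τ k))) * (Real.exp (a*τ k) * I k) = x (τ k) - I k := by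
      rw [hx0, show Real.exp (-(a*(τ k))) * (Real.exp (a*τ k) * I k) = I k from by
        rw [← mul_assoc, ← Real.exp_add]; simp]
    have hg := hgc.tendsto
    rw [hgv] at hg
    exact (hg.mono_left nhdsWithin_le_nhds).congr' hev.symm
end
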